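/- arXiv:1907.08037 — 3 statements merged into one kernel-verified Lean document; each statement's English description precedes it below -/
import Mathlib

section
/- For a single-qubit density matrix ρ = (I + r·σ)/2 with Bloch vector r depending smoothly on parameters x_a, x_b, the quantum Fisher information matrix entry equals F_ab = (∂_a r)·(∂_b r) + (r·∂_a r)(r·∂_b r)/(1 − |r|²), provided |r| < 1. -/
open Matrix

/-- The vector of Pauli matrices (σ_x, σ_y, σ_z). -/
noncomputable def pauli : Fin 3 → Matrix (Fin 2) (Fin 2) ℂ :=
  ![!![0, 1; 1, 0], !![0, -Complex.I; Complex.I, 0], !![1, 0; 0, -1]]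

/-- For a single-qubit density matrix ρ = (I + r·σ)/2 with Bloch vector `r` (|r| < 1),
partial derivatives of the Bloch vector `dra = ∂_a r`, `drb = ∂_b r`, and Hermitian SLD
operators `La`, `Lb` satisfying ∂_a ρ = (ρ L_a + L_a ρ)/2  (where ∂_a ρ = (∂_a r·σ)/2),
the QFIM entry (1/2)Tr(ρ{L_a,L_b}) equals
(∂_a r)·(∂_b r) + (r·∂_a r)(r·∂_b r)/(1 − |r|²). -/
theorem qfim_single_qubit_bloch
    (r dra drb : Fin 3 → ℝ)
    (hr : ∑ i, (r i) ^ 2 < 1)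
    (La Lb : Matrix (Fin 2) (Fin 2) ℂ)
    (hLa : La.IsHermitian) (hLb : Lb.IsHermitian)
    (ρ : Matrix (Fin 2) (Fin 2) ℂ)
    (hρ : ρ = (1/2 : ℂ) • ((1 : Matrix (Fin 2) (Fin 2) ℂ) + ∑ i, (r i : ℂ) • pauli i))
    (hSLDa : (1/2 : ℂ) • (∑ i, (dra i : ℂ) • pauli i) = (1/2 : ℂ) • (ρ * La + La * ρ))
    (hSLDb : (1/2 : ℂ) • (∑ i, (drb i : ℂ) • pauli i) = (1/2 : ℂ) • (ρ * Lb + Lb * ρ)) :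
    (1/2 : ℂ) * (ρ * (La * Lb + Lb * La)).trace
      = ((∑ i, dra i * drb i
          + (∑ i, r i * dra i) * (∑ i, r i * drb i) / (1 - ∑ i, (r i) ^ 2) : ℝ) : ℂ) := by
  have hA : (∑ i, (dra i : ℂ) • pauli i) = ρ * La + La * ρ :=
    smul_right_injective _ (by norm_num : (1/2:ℂ) ≠ 0) hSLDa
  have hB : (∑ i, (drb i : ℂ) • pauli i) = ρ * Lb + Lb * ρ :=
    smul_right_injective _ (by norm_num : (1/2:ℂ) ≠ 0) hSLDb
  have key : (ρ * (La * Lb + Lb * La)).trace = ((∑ i, (dra i : ℂ) • pauli i) * Lb).trace := by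
    rw [hA, Matrix.mul_add, Matrix.add_mul, Matrix.trace_add, Matrix.trace_add,
      Matrix.mul_assoc, ← Matrix.mul_assoc ρ Lb La, Matrix.trace_mul_comm (ρ*Lb) La, Matrix.mul_assoc La ρ Lb]
  rw [key]
  rw [hρ] at hB
  simp only [pauli, Fin.sum_univ_three] at hB ⊢
  have E := fun i j => congrFun (congrFun hB i) j
  have E1 := E 0 0
  have E2 := E 0 1
  have E3 := E 1 0
  have E4 := E 1 1
  simp [Matrix.mul_apply, Matrix.add_apply, Matrix.smul_apply, Fin.sum_univ_two,
    Matrix.one_apply] at E1 E2 E3 E4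
  have hS : (r 0)^2 + (r 1)^2 + (r 2)^2 < 1 := by simpa [Fin.sum_univ_three] using hr
  have h0 : (1 - ((r 0)^2 + (r 1)^2 + (r 2)^2) : ℝ) ≠ 0 := ne_of_gt (by linarith)
  have h1 : (1:ℂ) - ((r 0:ℂ)^2 + (r 1:ℂ)^2 + (r 2:ℂ)^2) ≠ 0 := by exact_mod_cast h0
  have hfinal : Lb 0 0 + Lb 1 1
      = -2*((r 0:ℂ)*(drb 0) + (r 1:ℂ)*(drb 1) + (r 2:ℂ)*(drb 2))
        / (1 - ((r 0:ℂ)^2 + (r 1:ℂ)^2 + (r 2:ℂ)^2)) := by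
    rw [eq_div_iff h1]
    linear_combination ((r 2:ℂ) - 1) * E1 + ((r 0:ℂ) + (r 1:ℂ)*Complex.I) * E2
      + ((r 0:ℂ) - (r 1:ℂ)*Complex.I) * E3 - (1 + (r 2:ℂ)) * E4
      + (-((r 1:ℂ))^2*(Lb 0 0 + Lb 1 1) + 2*(r 1:ℂ)*(drb 1:ℂ)) * Complex.I_sq
  simp [Matrix.trace_fin_two, Matrix.mul_apply, Fin.sum_univ_two, Matrix.vecMul,
    dotProduct]
  linear_combination (-(dra 2:ℂ)/2) * E1 - (((dra 0:ℂ) + (dra 1:ℂ)*Complex.I)/2) * E2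
    - (((dra 0:ℂ) - (dra 1:ℂ)*Complex.I)/2) * E3 + ((dra 2:ℂ)/2) * E4
    - (((r 0:ℂ)*(dra 0) + (r 1:ℂ)*(dra 1) + (r 2:ℂ)*(dra 2))/2) * hfinal
    + ((dra 1:ℂ)*((r 1:ℂ)*(Lb 0 0 + Lb 1 1)/2 - (drb 1:ℂ))) * Complex.I_sq
end

section
/- For a single-qubit mixed state ρ (rank 2, invertible) the QFIM admits the basis-independent expression F_ab = Tr[(∂_a ρ)(∂_b ρ)] + (1/det ρ) Tr[ρ(∂_a ρ)ρ(∂_b ρ)]. -/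
open Matrix
open scoped ComplexOrder

lemma ch2 (ρ : Matrix (Fin 2) (Fin 2) ℂ) (htr : ρ.trace = 1) :
    ρ * ρ = ρ - ρ.det • 1 := by
  have h : ρ 0 0 + ρ 1 1 = 1 := by simpa [Matrix.trace_fin_two] using htr
  ext i j
  fin_cases i <;> fin_cases j <;>
    simp [Matrix.mul_apply, Fin.sum_univ_two, Matrix.det_fin_two, Matrix.one_apply]
  · linear_combination ρ 0 0 * h
  · linear_combination ρ 0 1 * h
  · linear_combination ρ 1 0 * h
  · linear_combination ρ 1 1 * h

lemma polar2 (X Y : Matrix (Fin 2) (Fin 2) ℂ) (hX : X.trace = 0) (hY : Y.trace = 0) :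
    X * Y + Y * X = (X * Y).trace • 1 := by
  have hX' : X 0 0 + X 1 1 = 0 := by simpa [Matrix.trace_fin_two] using hX
  have hY' : Y 0 0 + Y 1 1 = 0 := by simpa [Matrix.trace_fin_two] using hY
  ext i j
  fin_cases i <;> fin_cases j <;>
    simp [Matrix.mul_apply, Fin.sum_univ_two, Matrix.trace_fin_two, Matrix.one_apply]
  · linear_combination Y 0 0 * hX' - X 1 1 * hY'
  · linear_combination Y 0 1 * hX' + X 0 1 * hY'
  · linear_combination Y 1 0 * hX' + X 1 0 * hY'
  · linear_combination X 1 1 * hY' - Y 0 0 * hX'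

/-- Basis-independent expression of the QFIM for a single-qubit (2×2, full-rank) mixed
state: with Hermitian traceless derivatives ∂_a ρ, ∂_b ρ and Hermitian SLDs L_a, L_b,
(1/2)Tr(ρ{L_a,L_b}) = Tr[(∂_a ρ)(∂_b ρ)] + (1/det ρ) Tr[ρ(∂_a ρ)ρ(∂_b ρ)]. -/
theorem qfim_single_qubit_basis_independent
    (ρ dρa dρb La Lb : Matrix (Fin 2) (Fin 2) ℂ)
    (hρ : ρ.PosDef) (htr : ρ.trace = 1)
    (hda : dρa.IsHermitian) (hdb : dρb.IsHermitian)
    (hdtra : dρa.trace = 0) (hdtrb : dρb.trace = 0)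
    (hLa : La.IsHermitian) (hLb : Lb.IsHermitian)
    (hSLDa : dρa = (1/2 : ℂ) • (ρ * La + La * ρ))
    (hSLDb : dρb = (1/2 : ℂ) • (ρ * Lb + Lb * ρ)) :
    (1/2 : ℂ) * (ρ * (La * Lb + Lb * La)).trace
      = (dρa * dρb).trace + (ρ.det)⁻¹ * (ρ * dρa * ρ * dρb).trace := by
  subst hSLDa hSLDb
  have hd : ρ.det ≠ 0 := hρ.det_pos.ne'
  have hta : (ρ * La).trace = 0 := by
    simp only [Matrix.trace_smul, Matrix.trace_add, Matrix.trace_mul_comm La ρ,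
      smul_eq_mul] at hdtra
    linear_combination hdtra
  have htb : (ρ * Lb).trace = 0 := by
    simp only [Matrix.trace_smul, Matrix.trace_add, Matrix.trace_mul_comm Lb ρ,
      smul_eq_mul] at hdtrb
    linear_combination hdtrb
  have hK := polar2 (ρ * La) (ρ * Lb) hta htb
  have hM : ρ * (La * (ρ * Lb) + Lb * (ρ * La))
      = ((ρ * La) * (ρ * Lb)).trace • (1 : Matrix (Fin 2) (Fin 2) ℂ) := by
    rw [← hK]; noncomm_ring
  have hadj : (1 - ρ) * ρ = ρ.det • (1 : Matrix (Fin 2) (Fin 2) ℂ) := by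
    rw [sub_mul, one_mul, ch2 ρ htr]; abel
  have h5 : ρ.det • (La * (ρ * Lb) + Lb * (ρ * La))
      = ((ρ * La) * (ρ * Lb)).trace • (1 - ρ) := by
    calc ρ.det • (La * (ρ * Lb) + Lb * (ρ * La))
        = (ρ.det • (1 : Matrix (Fin 2) (Fin 2) ℂ)) * (La * (ρ * Lb) + Lb * (ρ * La)) := by
          rw [smul_mul_assoc, one_mul]
      _ = ((1 - ρ) * ρ) * (La * (ρ * Lb) + Lb * (ρ * La)) := by rw [hadj]
      _ = (1 - ρ) * (ρ * (La * (ρ * Lb) + Lb * (ρ * La))) := by rw [mul_assoc]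
      _ = (1 - ρ) * (((ρ * La) * (ρ * Lb)).trace • 1) := by rw [hM]
      _ = ((ρ * La) * (ρ * Lb)).trace • (1 - ρ) := by rw [mul_smul_comm, mul_one]
  have e3 := congrArg Matrix.trace h5
  simp only [Matrix.trace_smul, Matrix.trace_add, Matrix.trace_sub, Matrix.trace_one,
    htr, smul_eq_mul, Fintype.card_fin, Nat.cast_ofNat] at e3
  -- e3 : ρ.det * ((La*(ρ*Lb)).trace + (Lb*(ρ*La)).trace) = ((ρ*La)*(ρ*Lb)).trace * (2 - 1)
  have h11 : ρ 1 1 = 1 - ρ 0 0 := by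
    have h := htr; simp only [Matrix.trace_fin_two] at h; linear_combination h
  have key : ρ.det * ((1/2 : ℂ) * (ρ * (La * Lb + Lb * La)).trace)
      = ρ.det * (((1/2 : ℂ) • (ρ * La + La * ρ)) * ((1/2 : ℂ) • (ρ * Lb + Lb * ρ))).trace
        + (ρ * ((1/2 : ℂ) • (ρ * La + La * ρ)) * ρ * ((1/2 : ℂ) • (ρ * Lb + Lb * ρ))).trace := by
    simp only [Matrix.trace_fin_two, Matrix.mul_apply, Matrix.smul_apply, Matrix.add_apply,
      Fin.sum_univ_two, Matrix.det_fin_two, smul_eq_mul] at e3 ⊢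
    rw [h11] at e3 ⊢
    linear_combination e3
  have h6 : (ρ.det)⁻¹ * (ρ * ((1/2 : ℂ) • (ρ * La + La * ρ)) * ρ * ((1/2 : ℂ) • (ρ * Lb + Lb * ρ))).trace
      = (1/2 : ℂ) * (ρ * (La * Lb + Lb * La)).trace
        - (((1/2 : ℂ) • (ρ * La + La * ρ)) * ((1/2 : ℂ) • (ρ * Lb + Lb * ρ))).trace := by
    rw [inv_mul_eq_div, div_eq_iff hd]
    linear_combination -key
  linear_combination -h6
end

section
/- For 2×2 density matrices it holds that Tr[(∂_a ρ)(∂_b ρ)] = Tr(ρ{∂_a ρ, ∂_b ρ}), where ∂_a ρ, ∂_b ρ are derivatives of a smooth family of 2×2 density matrices. -/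
open Matrix
open scoped ComplexOrder

/-- For 2×2 density matrices, Tr[(∂_a ρ)(∂_b ρ)] = Tr(ρ{∂_a ρ, ∂_b ρ}), where the
derivatives of the family are Hermitian traceless matrices A = ∂_a ρ, B = ∂_b ρ. -/
theorem trace_drho_identity_qubit
    (ρ A B : Matrix (Fin 2) (Fin 2) ℂ)
    (hρ : ρ.PosSemidef) (htr : ρ.trace = 1)
    (hA : A.IsHermitian) (hB : B.IsHermitian)
    (hAtr : A.trace = 0) (hBtr : B.trace = 0) :
    (A * B).trace = (ρ * (A * B + B * A)).trace := by
  simp only [Matrix.trace, Matrix.diag, Matrix.mul_apply, Matrix.add_apply,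
    Fin.sum_univ_two] at *
  have hA' : A 1 1 = -A 0 0 := by linear_combination hAtr
  have hB' : B 1 1 = -B 0 0 := by linear_combination hBtr
  have hρ' : ρ 1 1 = 1 - ρ 0 0 := by linear_combination htr
  rw [hA', hB', hρ']
  ring
end
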